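/- If |⟨x_j, θ*⟩| < 1, where θ* is the optimal dual variable of the Lasso problem, then the j-th component β*_j of any Lasso optimal solution β* is zero. -/

import Mathlib

open RealInnerProductSpace

set_option maxHeartbeats 1000000 in
theorem stmt_1 {n p : ℕ} (X : Fin p → EuclideanSpace ℝ (Fin n))
    (y : EuclideanSpace ℝ (Fin n)) (lam : ℝ) (hlam : 0 < lam)
    (θs : EuclideanSpace ℝ (Fin n))
    (hθmem : ∀ j, |(⟪X j, θs⟫)| ≤ 1)
    (hθopt : ∀ θ : EuclideanSpace ℝ (Fin n), (∀ j, |(⟪X j, θ⟫)| ≤ 1) →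
      ‖θs - (1 / lam) • y‖ ≤ ‖θ - (1 / lam) • y‖)
    (βs : Fin p → ℝ)
    (hβopt : ∀ β : Fin p → ℝ,
      (1 / 2) * ‖(∑ j, βs j • X j) - y‖ ^ 2 + lam * ∑ j, |βs j| ≤
      (1 / 2) * ‖(∑ j, β j • X j) - y‖ ^ 2 + lam * ∑ j, |β j|)
    (j : Fin p) (hj : |(⟪X j, θs⟫)| < 1) : βs j = 0 := by
  classical
  set S : EuclideanSpace ℝ (Fin n) := ∑ k, βs k • X k with hS
  set r : EuclideanSpace ℝ (Fin n) := y - S with hr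
  set c : Fin p → ℝ := fun i => ⟪X i, r⟫ with hc
  -- Key perturbation inequality
  have key : ∀ (i : Fin p) (t : ℝ),
      0 ≤ -(t * c i) + t ^ 2 / 2 * ‖X i‖ ^ 2 + lam * (|βs i + t| - |βs i|) := by
    intro i t
    have key := hβopt (Function.update βs i (βs i + t))
    have hsum : (∑ k, Function.update βs i (βs i + t) k • X k) = S + t • X i := by
      have h1 : ∀ k, Function.update βs i (βs i + t) k • X k
          = βs k • X k + (if k = i then t • X i else 0) := by
        intro k
        by_cases h : k = i
        · subst h; simp [add_smul]
        · simp [Function.update, h]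
      rw [Finset.sum_congr rfl (fun k _ => h1 k), Finset.sum_add_distrib]
      simp [hS]
    have habs : (∑ k, |Function.update βs i (βs i + t) k|)
        = (∑ k, |βs k|) + (|βs i + t| - |βs i|) := by
      have h1 : ∀ k, |Function.update βs i (βs i + t) k|
          = |βs k| + (if k = i then |βs i + t| - |βs i| else 0) := by
        intro k
        by_cases h : k = i
        · subst h; simp
        · simp [Function.update, h]
      rw [Finset.sum_congr rfl (fun k _ => h1 k), Finset.sum_add_distrib]
      simp
    rw [hsum, habs] at key
    have hexp : ‖S + t • X i - y‖ ^ 2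
        = ‖S - y‖ ^ 2 + 2 * (t * ⟪S - y, X i⟫) + t ^ 2 * ‖X i‖ ^ 2 := by
      have h2 : S + t • X i - y = (S - y) + t • X i := by abel
      rw [h2, norm_add_sq_real, real_inner_smul_right, norm_smul, mul_pow,
        Real.norm_eq_abs, sq_abs]
    rw [hexp] at key
    have hinner : ⟪S - y, X i⟫ = -c i := by
      rw [real_inner_comm, hc]
      simp only [hr, show S - y = -(y - S) by abel, inner_neg_right]
    rw [hinner] at key
    nlinarith [key]
  -- dual feasibility of r / lam
  have hA : ∀ i, |c i| ≤ lam := by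
    intro i
    set M := ‖X i‖ ^ 2 with hM
    have hM0 : 0 ≤ M := by positivity
    rw [abs_le]
    constructor
    · rw [neg_le]
      apply le_of_forall_pos_le_add
      intro ε hε
      set t : ℝ := 2 * ε / (M + 1) with ht
      have ht0 : 0 < t := by positivity
      have htM : t * (M + 1) = 2 * ε := by rw [ht]; exact div_mul_cancel₀ _ (ne_of_gt (by linarith))
      have hk := key i (-t)
      have habs : |βs i + -t| - |βs i| ≤ t := by
        have h3 := abs_add_le (βs i) (-t)
        rw [abs_neg, abs_of_pos ht0] at h3
        linarith
      nlinarith [hk, habs]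
    · apply le_of_forall_pos_le_add
      intro ε hε
      set t : ℝ := 2 * ε / (M + 1) with ht
      have ht0 : 0 < t := by positivity
      have htM : t * (M + 1) = 2 * ε := by rw [ht]; exact div_mul_cancel₀ _ (ne_of_gt (by linarith))
      have hk := key i t
      have habs : |βs i + t| - |βs i| ≤ t := by
        have := abs_add_le (βs i) t
        rw [abs_of_pos ht0] at this
        linarith
      nlinarith [hk, habs]
  -- complementary slackness
  have hB : ∀ i, βs i * c i = lam * |βs i| := by
    intro i
    rcases lt_trichotomy (βs i) 0 with hb | hb | hb
    · have hcl : c i ≤ -lam := by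
        apply le_of_forall_pos_le_add
        intro ε hε
        set M := ‖X i‖ ^ 2 with hM
        have hM0 : 0 ≤ M := by positivity
        set s : ℝ := min (-βs i) (2 * ε / (M + 1)) with hs
        have hs0 : 0 < s := lt_min (by linarith) (by positivity)
        have hsb : s ≤ -βs i := min_le_left _ _
        have hsM : s * (M + 1) ≤ 2 * ε := by
          have h1 : s ≤ 2 * ε / (M + 1) := min_le_right _ _
          have h2 : (0:ℝ) < M + 1 := by linarith
          calc s * (M + 1) ≤ (2 * ε / (M + 1)) * (M + 1) :=
              mul_le_mul_of_nonneg_right h1 (le_of_lt h2)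
            _ = 2 * ε := by field_simp
        have hk := key i s
        have habs : |βs i + s| - |βs i| = -s := by
          rw [abs_of_nonpos (by linarith), abs_of_neg hb]; ring
        rw [habs] at hk
        nlinarith [hk]
      have hcg : -lam ≤ c i := (abs_le.mp (hA i)).1
      have : c i = -lam := le_antisymm hcl hcg
      rw [this, abs_of_neg hb]; ring
    · simp [hb]
    · have hcg : lam ≤ c i := by
        apply le_of_forall_pos_le_add
        intro ε hε
        set M := ‖X i‖ ^ 2 with hM
        have hM0 : 0 ≤ M := by positivity
        set s : ℝ := min (βs i) (2 * ε / (M + 1)) with hs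
        have hs0 : 0 < s := lt_min hb (by positivity)
        have hsb : s ≤ βs i := min_le_left _ _
        have hsM : s * (M + 1) ≤ 2 * ε := by
          have h1 : s ≤ 2 * ε / (M + 1) := min_le_right _ _
          have h2 : (0:ℝ) < M + 1 := by linarith
          calc s * (M + 1) ≤ (2 * ε / (M + 1)) * (M + 1) :=
              mul_le_mul_of_nonneg_right h1 (le_of_lt h2)
            _ = 2 * ε := by field_simp
        have hk := key i (-s)
        have habs : |βs i + -s| - |βs i| = -s := by
          rw [abs_of_nonneg (by linarith), abs_of_pos hb]; ring
        rw [habs] at hk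
        nlinarith [hk]
      have hcl : c i ≤ lam := (abs_le.mp (hA i)).2
      have : c i = lam := le_antisymm hcl hcg
      rw [this, abs_of_pos hb]; ring
  set u : EuclideanSpace ℝ (Fin n) := (1 / lam) • y with hu
  set θ' : EuclideanSpace ℝ (Fin n) := (1 / lam) • r with hθ'
  have hθ'inner : ∀ i, (⟪X i, θ'⟫ : ℝ) = (1 / lam) * c i := by
    intro i; rw [hθ', real_inner_smul_right]
  have feas' : ∀ i, |(⟪X i, θ'⟫ : ℝ)| ≤ 1 := by
    intro i
    rw [hθ'inner i, abs_mul, abs_of_pos (by positivity : (0:ℝ) < 1 / lam)]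
    rw [div_mul_eq_mul_div, one_mul, div_le_one hlam]
    exact hA i
  have hSθ : ∀ θ : EuclideanSpace ℝ (Fin n), (⟪S, θ⟫ : ℝ) = ∑ i, βs i * ⟪X i, θ⟫ := by
    intro θ
    rw [hS, sum_inner]
    exact Finset.sum_congr rfl fun i _ => real_inner_smul_left _ _ _
  -- θ' is the projection of u
  have hproj : ∀ θ : EuclideanSpace ℝ (Fin n), (∀ i, |(⟪X i, θ⟫ : ℝ)| ≤ 1) →
      ‖θ' - u‖ ≤ ‖θ - u‖ := by
    intro θ hfeas
    have hdiff : θ' - u = (1 / lam) • (-S) := by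
      rw [hθ', hu, ← smul_sub, hr]
      congr 1
      abel
    have hip : (0:ℝ) ≤ ⟪θ - θ', θ' - u⟫ := by
      rw [hdiff, real_inner_smul_right]
      have h1 : (⟪θ - θ', -S⟫ : ℝ) = ⟪S, θ'⟫ - ⟪S, θ⟫ := by
        rw [inner_neg_right, inner_sub_left, real_inner_comm θ S, real_inner_comm θ' S]
        ring
      rw [h1, hSθ θ, hSθ θ']
      have h2 : (∑ i, βs i * ⟪X i, θ'⟫) = ∑ i, |βs i| := by
        apply Finset.sum_congr rfl
        intro i _
        rw [hθ'inner i]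
        have := hB i
        field_simp
        nlinarith [hB i]
      have h3 : (∑ i, βs i * ⟪X i, θ⟫) ≤ ∑ i, |βs i| := by
        apply Finset.sum_le_sum
        intro i _
        calc βs i * ⟪X i, θ⟫ ≤ |βs i * ⟪X i, θ⟫| := le_abs_self _
          _ = |βs i| * |(⟪X i, θ⟫ : ℝ)| := abs_mul _ _
          _ ≤ |βs i| * 1 := mul_le_mul_of_nonneg_left (hfeas i) (abs_nonneg _)
          _ = |βs i| := mul_one _
      rw [h2]
      have : (0:ℝ) < 1 / lam := by positivity
      nlinarith
    have hsq : ‖θ' - u‖ ^ 2 ≤ ‖θ - u‖ ^ 2 := by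
      have hdecomp : θ - u = (θ - θ') + (θ' - u) := by abel
      rw [hdecomp, norm_add_sq_real]
      nlinarith [sq_nonneg ‖θ - θ'‖]
    exact le_of_pow_le_pow_left₀ two_ne_zero (norm_nonneg _) hsq
  -- uniqueness of projection: θs = θ'
  have heq : θs = θ' := by
    have d1 : ‖θs - u‖ ≤ ‖θ' - u‖ := hθopt θ' feas'
    have d2 : ‖θ' - u‖ ≤ ‖θs - u‖ := hproj θs hθmem
    set m : EuclideanSpace ℝ (Fin n) := (2⁻¹ : ℝ) • (θs + θ') with hm
    have feasm : ∀ i, |(⟪X i, m⟫ : ℝ)| ≤ 1 := by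
      intro i
      rw [hm, real_inner_smul_right, inner_add_right]
      rw [abs_mul, abs_of_pos (by norm_num : (0:ℝ) < 2⁻¹)]
      have := abs_add_le (⟪X i, θs⟫ : ℝ) (⟪X i, θ'⟫ : ℝ)
      have h1 := hθmem i
      have h2 := feas' i
      nlinarith [abs_nonneg ((⟪X i, θs⟫ : ℝ) + ⟪X i, θ'⟫)]
    have dm : ‖θs - u‖ ≤ ‖m - u‖ := hθopt m feasm
    have e1 : ‖(θs - u) + (θ' - u)‖ ^ 2 = ‖θs - u‖ ^ 2 + 2 * ⟪θs - u, θ' - u⟫ + ‖θ' - u‖ ^ 2 :=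
      norm_add_sq_real _ _
    have e2 : ‖(θs - u) - (θ' - u)‖ ^ 2 = ‖θs - u‖ ^ 2 - 2 * ⟪θs - u, θ' - u⟫ + ‖θ' - u‖ ^ 2 :=
      norm_sub_sq_real _ _
    have hsum2 : (θs - u) + (θ' - u) = (2:ℝ) • (m - u) := by
      rw [hm, smul_sub, smul_smul]
      norm_num
      module
    have hnorm2 : ‖(θs - u) + (θ' - u)‖ = 2 * ‖m - u‖ := by
      rw [hsum2, norm_smul, Real.norm_two]
    have hd : (θs - u) - (θ' - u) = θs - θ' := by abel
    rw [hnorm2] at e1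
    rw [hd] at e2
    have hzero : ‖θs - θ'‖ ^ 2 ≤ 0 := by
      nlinarith [e1, e2, dm, d1, d2, norm_nonneg (θs - u), norm_nonneg (m - u),
        mul_le_mul dm dm (norm_nonneg (θs - u)) (norm_nonneg (m - u)),
        mul_le_mul d2 d2 (norm_nonneg (θ' - u)) (norm_nonneg (θs - u))]
    have h0 : ‖θs - θ'‖ = 0 := by nlinarith [norm_nonneg (θs - θ')]
    exact sub_eq_zero.mp (norm_eq_zero.mp h0)
  -- conclusion
  by_contra hne
  have hbb := hB j
  have hcj : |c j| < lam := by
    have h1 : (⟪X j, θs⟫ : ℝ) = (1 / lam) * c j := by rw [heq]; exact hθ'inner j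
    rw [h1, abs_mul, abs_of_pos (show (0:ℝ) < 1 / lam by positivity)] at hj
    rw [one_div, inv_mul_eq_div] at hj
    exact (div_lt_one hlam).mp hj
  have habsj : 0 < |βs j| := abs_pos.mpr hne
  nlinarith [le_abs_self (βs j * c j), abs_mul (βs j) (c j), abs_nonneg (c j)]
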